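/- arXiv:1010.2361 — 2 statements merged into one kernel-verified Lean document; each statement's English description precedes it below -/
import Mathlib

section
/- Let ψ₁, ψ₂, ψ₃ be unit vectors in ℂ² and let n₁, n₂, n₃ be natural numbers. Then there exists a unit vector φ ∈ ℂ² such that for every density matrix ρ on ℂ² one has ∏_{j=1}^3 (ψ_j† ρ ψ_j)^{n_j} ≤ ∏_{j=1}^3 |⟨φ, ψ_j⟩|^{2 n_j}; that is, for any pure symmetric multiqubit state with at most three distinct Majorana points, the associated likelihood functional attains its maximum over density matrices at a pure state. -/
open scoped BigOperators ComplexOrder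

/-- The standard Hermitian inner product on `ℂ^d`, conjugate-linear in the
first argument: `⟨φ, ψ⟩ = ∑ i, conj (φ i) * ψ i`. -/
noncomputable def inp {d : ℕ} (φ ψ : Fin d → ℂ) : ℂ :=
  ∑ i, (starRingEnd ℂ) (φ i) * ψ i

open scoped RealInnerProductSpace

abbrev V3 := EuclideanSpace ℝ (Fin 3)


noncomputable def fF (s : Fin 3 → V3) (n : Fin 3 → ℕ) (r : V3) : ℝ :=
  ∏ j, ((1 + ⟪r, s j⟫)/2)^(n j)

lemma fF_cont (s : Fin 3 → V3) (n : Fin 3 → ℕ) : Continuous (fF s n) := by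
  unfold fF
  exact continuous_finset_prod _ fun j _ =>
    ((continuous_const.add ((continuous_id.inner continuous_const : Continuous fun r : V3 => ⟪r, s j⟫))).div_const 2).pow _

lemma factor_nonneg {r s : V3} (hr : ‖r‖ ≤ 1) (hs : ‖s‖ ≤ 1) :
    0 ≤ (1 + ⟪r, s⟫)/2 := by
  have h := abs_real_inner_le_norm r s
  have h2 : ‖r‖ * ‖s‖ ≤ 1 := by nlinarith [norm_nonneg r, norm_nonneg s]
  have h3 := abs_le.mp (h.trans h2)
  linarith [h3.1]

lemma fF_nonneg {s : Fin 3 → V3} (hs : ∀ j, ‖s j‖ ≤ 1) (n : Fin 3 → ℕ) {r : V3}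
    (hr : ‖r‖ ≤ 1) : 0 ≤ fF s n r :=
  Finset.prod_nonneg fun j _ => pow_nonneg (factor_nonneg hr (hs j)) _

lemma core (s : Fin 3 → V3) (hs : ∀ j, ‖s j‖ ≤ 1) (n : Fin 3 → ℕ) :
    ∃ rs : V3, ‖rs‖ = 1 ∧ ∀ r : V3, ‖r‖ ≤ 1 → fF s n r ≤ fF s n rs := by
  have he : ‖(EuclideanSpace.single 0 (1:ℝ) : V3)‖ = 1 := by
    simp [EuclideanSpace.norm_single]
  obtain ⟨rs, hrs_mem, hrs_max⟩ := (isCompact_sphere (0:V3) 1).exists_isMaxOn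
    ⟨_, mem_sphere_zero_iff_norm.mpr he⟩ (fF_cont s n).continuousOn
  have hrs_norm : ‖rs‖ = 1 := mem_sphere_zero_iff_norm.mp hrs_mem
  refine ⟨rs, hrs_norm, ?_⟩
  suffices h : ∀ r : V3, ‖r‖ ≤ 1 → ∃ r' : V3, ‖r'‖ = 1 ∧ fF s n r ≤ fF s n r' by
    intro r hr
    obtain ⟨r', hr'1, hr'2⟩ := h r hr
    exact hr'2.trans (hrs_max (mem_sphere_zero_iff_norm.mpr hr'1))
  set s' : Fin 3 → V3 := fun j => if n j = 0 then 0 else s j with hs'def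
  set K := Submodule.span ℝ (Set.range s') with hKdef
  by_cases hK : K = ⊤
  · -- Case B: the relevant Bloch vectors span ℝ³
    set T : V3 →ₗ[ℝ] (Fin 3 → ℝ) :=
      { toFun := fun v j => ⟪s' j, v⟫
        map_add' := by intro x y; funext j; simp [inner_add_right]
        map_smul' := by intro c x; funext j; simp [inner_smul_right] } with hTdef
    have hTinj : Function.Injective T := by
      rw [← LinearMap.ker_eq_bot]
      rw [Submodule.eq_bot_iff]
      intro v hv
      have hv' : ∀ j, ⟪s' j, v⟫ = 0 := fun j => congrFun hv j
      have hKv : ∀ x ∈ K, ⟪x, v⟫ = (0:ℝ) := by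
        intro x hx
        induction hx using Submodule.span_induction with
        | mem x hx => obtain ⟨j, rfl⟩ := hx; exact hv' j
        | zero => simp
        | add x y _ _ hx hy => rw [inner_add_left, hx, hy]; ring
        | smul c x _ hx => rw [real_inner_smul_left, hx]; ring
      have : ⟪v, v⟫ = (0:ℝ) := hKv v (hK ▸ Submodule.mem_top)
      exact inner_self_eq_zero.mp this
    have hTsurj : Function.Surjective T :=
      (LinearMap.injective_iff_surjective_of_finrank_eq_finrank (by simp)).mp hTinj
    -- all exponents are positive
    have hn : ∀ j, n j ≠ 0 := by
      intro j hj
      obtain ⟨v, hv⟩ := hTsurj (Pi.single j 1)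
      have h1 : ⟪s' j, v⟫ = (1:ℝ) := by
        have := congrFun hv j; rw [hTdef, LinearMap.coe_mk, AddHom.coe_mk] at this; simpa using this
      rw [hs'def] at h1
      simp [hj] at h1
    have hs'eq : ∀ j, s' j = s j := fun j => by simp [hs'def, hn j]
    -- maximize over the closed ball
    obtain ⟨r₀, hr₀mem, hmax⟩ := (isCompact_closedBall (0:V3) 1).exists_isMaxOn
      ⟨0, by simp⟩ (fF_cont s n).continuousOn
    have hr₀ : ‖r₀‖ ≤ 1 := by simpa using mem_closedBall_zero_iff.mp hr₀mem
    by_cases hb : ‖r₀‖ = 1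
    · exact fun r hr => ⟨r₀, hb, hmax (mem_closedBall_zero_iff.mpr hr)⟩
    have hr₀lt : ‖r₀‖ < 1 := lt_of_le_of_ne hr₀ hb
    by_cases hf : fF s n r₀ ≤ 0
    · intro r hr
      refine ⟨_, he, ?_⟩
      have h1 : fF s n r ≤ fF s n r₀ := hmax (mem_closedBall_zero_iff.mpr hr)
      exact h1.trans (hf.trans (fF_nonneg hs n he.le))
    push_neg at hf
    -- derive a contradiction
    exfalso
    set c : Fin 3 → ℝ := fun j => 1 + ⟪r₀, s j⟫ with hcdef
    have hcj : ∀ j, c j = 1 + ⟪r₀, s j⟫ := fun j => rfl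
    have hcnn : ∀ j, 0 ≤ c j := by
      intro j
      have := factor_nonneg hr₀ (hs j)
      rw [hcj]
      linarith
    have hcpos : ∀ j, 0 < c j := by
      intro j
      rcases (hcnn j).lt_or_eq with h | h
      · exact h
      · exfalso
        have hz : (1:ℝ) + ⟪r₀, s j⟫ = 0 := by rw [hcj] at h; linarith
        have : fF s n r₀ = 0 := by
          apply Finset.prod_eq_zero (Finset.mem_univ j)
          rw [hz]
          simp [zero_pow (hn j)]
        linarith
    obtain ⟨v, hv⟩ := hTsurj c
    have hvinner : ∀ j, ⟪s j, v⟫ = c j := by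
      intro j
      have := congrFun hv j
      rwa [hTdef, LinearMap.coe_mk, AddHom.coe_mk, hs'eq j] at this
    have hvne : v ≠ 0 := by
      intro h
      have := hvinner 0
      rw [h, inner_zero_right] at this
      exact absurd this.symm (ne_of_gt (hcpos 0))
    set t : ℝ := (1 - ‖r₀‖)/‖v‖ with htdef
    have ht : 0 < t := div_pos (by linarith) (norm_pos_iff.mpr hvne)
    set r₁ : V3 := r₀ + t • v with hr₁def
    have hr₁ : ‖r₁‖ ≤ 1 := by
      calc ‖r₀ + t • v‖ ≤ ‖r₀‖ + ‖t • v‖ := norm_add_le _ _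
        _ = ‖r₀‖ + t * ‖v‖ := by rw [norm_smul, Real.norm_of_nonneg ht.le]
        _ = 1 := by
            rw [htdef, div_mul_cancel₀ _ (norm_ne_zero_iff.mpr hvne)]
            ring
    have hkey : fF s n r₁ = fF s n r₀ * (1+t)^(∑ j, n j) := by
      rw [fF, fF, ← Finset.prod_pow_eq_pow_sum, ← Finset.prod_mul_distrib]
      apply Finset.prod_congr rfl
      intro j _
      rw [← mul_pow]
      congr 1
      have h1 : ⟪v, s j⟫ = 1 + ⟪r₀, s j⟫ := by
        rw [real_inner_comm]
        rw [hvinner j, hcj]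
      rw [hr₁def, inner_add_left, real_inner_smul_left, h1]
      ring
    have hN : (∑ j, n j) ≠ 0 := by
      have h0 : n 0 ≤ ∑ j, n j :=
        Finset.single_le_sum (fun _ _ => Nat.zero_le _) (Finset.mem_univ 0)
      intro h
      exact hn 0 (by omega)
    have h1t : 1 < (1+t)^(∑ j, n j) := one_lt_pow₀ (by linarith) hN
    have hgt : fF s n r₀ < fF s n r₁ := by
      rw [hkey]
      nlinarith
    have := hmax (mem_closedBall_zero_iff.mpr hr₁)
    exact absurd this (not_le.mpr hgt)
  · -- Case A: common orthogonal direction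
    have hKbot : Kᗮ ≠ ⊥ := fun h => hK (Submodule.orthogonal_eq_bot_iff.mp h)
    obtain ⟨u0, hu0K, hu0ne⟩ := (Submodule.ne_bot_iff _).mp hKbot
    set u : V3 := ‖u0‖⁻¹ • u0 with hudef
    have hune : ‖u‖ = 1 := by
      rw [hudef, norm_smul, Real.norm_of_nonneg (inv_nonneg.mpr (norm_nonneg _)),
        inv_mul_cancel₀ (norm_ne_zero_iff.mpr hu0ne)]
    have huK : u ∈ Kᗮ := Submodule.smul_mem _ _ hu0K
    have hu : ∀ j, n j ≠ 0 → ⟪u, s j⟫ = 0 := by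
      intro j hj
      have hmem : s j ∈ K := by
        apply Submodule.subset_span
        exact ⟨j, by simp [hs'def, hj]⟩
      have := (Submodule.mem_orthogonal _ _).mp huK (s j) hmem
      rwa [real_inner_comm] at this
    clear_value u
    intro r hr
    set p : V3 := r - ⟪u, r⟫ • u with hpdef
    have hpu : ⟪u, p⟫ = 0 := by
      rw [hpdef, inner_sub_right, real_inner_smul_right, real_inner_self_eq_norm_sq, hune]
      ring
    have hps : ∀ j, n j ≠ 0 → ⟪p, s j⟫ = ⟪r, s j⟫ := by
      intro j hj
      rw [hpdef, inner_sub_left, real_inner_smul_left, hu j hj]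
      ring
    have hpnorm : ‖p‖^2 ≤ 1 := by
      have hsum : ‖p + ⟪u, r⟫ • u‖^2 = ‖p‖^2 + 2*⟪p, ⟪u, r⟫ • u⟫ + ‖⟪u, r⟫ • u‖^2 :=
        norm_add_sq_real _ _
      have hpr : p + ⟪u, r⟫ • u = r := by rw [hpdef]; abel
      rw [hpr] at hsum
      have h0 : ⟪p, ⟪u, r⟫ • u⟫ = 0 := by
        rw [real_inner_smul_right, real_inner_comm u p, hpu]; ring
      rw [h0] at hsum
      nlinarith [norm_nonneg r, sq_nonneg ‖⟪u, r⟫ • u‖]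
    clear_value p
    set t : ℝ := Real.sqrt (1 - ‖p‖^2) with htdef
    have ht2 : t^2 = 1 - ‖p‖^2 := Real.sq_sqrt (by linarith)
    set r' : V3 := p + t • u with hr'def
    have hr'norm : ‖r'‖ = 1 := by
      have h1 : ‖r'‖^2 = 1 := by
        rw [hr'def, norm_add_sq_real, real_inner_smul_right, real_inner_comm u p, hpu,
          norm_smul, Real.norm_eq_abs, hune, mul_one, sq_abs, ht2]
        ring
      nlinarith [norm_nonneg r']
    refine ⟨r', hr'norm, le_of_eq ?_⟩
    rw [fF, fF]
    apply Finset.prod_congr rfl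
    intro j _
    by_cases hj : n j = 0
    · rw [hj, pow_zero, pow_zero]
    congr 2
    rw [hr'def, inner_add_left, real_inner_smul_left, hu j hj, hps j hj]
    ring


lemma V3_inner (x y : V3) : ⟪x, y⟫ = x 0 * y 0 + x 1 * y 1 + x 2 * y 2 := by
  simp [PiLp.inner_apply, RCLike.inner_apply, Fin.sum_univ_three, starRingEnd_apply]
  ring

noncomputable def bloch (ψ : Fin 2 → ℂ) : V3 :=
  (WithLp.equiv 2 (Fin 3 → ℝ)).symm
    ![2 * ((starRingEnd ℂ) (ψ 0) * ψ 1).re, 2 * ((starRingEnd ℂ) (ψ 0) * ψ 1).im,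
      Complex.normSq (ψ 0) - Complex.normSq (ψ 1)]

lemma bloch_0 (ψ : Fin 2 → ℂ) : bloch ψ 0 = 2 * ((starRingEnd ℂ) (ψ 0) * ψ 1).re := rfl
lemma bloch_1 (ψ : Fin 2 → ℂ) : bloch ψ 1 = 2 * ((starRingEnd ℂ) (ψ 0) * ψ 1).im := rfl
lemma bloch_2 (ψ : Fin 2 → ℂ) : bloch ψ 2 = Complex.normSq (ψ 0) - Complex.normSq (ψ 1) := rfl

lemma inp_self (ψ : Fin 2 → ℂ) :
    inp ψ ψ = ((Complex.normSq (ψ 0) + Complex.normSq (ψ 1) : ℝ) : ℂ) := by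
  rw [inp, Fin.sum_univ_two, Complex.ofReal_add, Complex.normSq_eq_conj_mul_self,
    Complex.normSq_eq_conj_mul_self]

lemma unit_sum {ψ : Fin 2 → ℂ} (h : inp ψ ψ = 1) :
    Complex.normSq (ψ 0) + Complex.normSq (ψ 1) = 1 := by
  rw [inp_self] at h
  exact_mod_cast h

lemma bloch_norm {ψ : Fin 2 → ℂ} (h : Complex.normSq (ψ 0) + Complex.normSq (ψ 1) = 1) :
    ‖bloch ψ‖ = 1 := by
  have h1 : ⟪bloch ψ, bloch ψ⟫ = 1 := by
    rw [V3_inner, bloch_0, bloch_1, bloch_2]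
    simp only [Complex.normSq_apply, Complex.mul_re, Complex.mul_im,
      Complex.conj_re, Complex.conj_im] at h ⊢
    nlinarith [h]
  have h2 : ⟪bloch ψ, bloch ψ⟫ = ‖bloch ψ‖^2 := real_inner_self_eq_norm_sq _
  nlinarith [norm_nonneg (bloch ψ), h1, h2]

lemma pure_overlap {φ ψ : Fin 2 → ℂ}
    (hφ : Complex.normSq (φ 0) + Complex.normSq (φ 1) = 1)
    (hψ : Complex.normSq (ψ 0) + Complex.normSq (ψ 1) = 1) :
    (‖inp φ ψ‖)^2 = (1 + ⟪bloch φ, bloch ψ⟫)/2 := by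
  rw [Complex.sq_norm, V3_inner, bloch_0, bloch_1, bloch_2, bloch_0, bloch_1, bloch_2,
    inp, Fin.sum_univ_two]
  simp only [Complex.normSq_apply, Complex.add_re, Complex.add_im, Complex.mul_re,
    Complex.mul_im, Complex.conj_re, Complex.conj_im] at hφ hψ ⊢
  nlinarith [hφ, hψ]

noncomputable def mkV3 (x y z : ℝ) : V3 := (WithLp.equiv 2 (Fin 3 → ℝ)).symm ![x, y, z]
lemma mkV3_0 (x y z : ℝ) : mkV3 x y z 0 = x := rfl
lemma mkV3_1 (x y z : ℝ) : mkV3 x y z 1 = y := rfl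
lemma mkV3_2 (x y z : ℝ) : mkV3 x y z 2 = z := rfl

lemma rho_bloch {ρ : Matrix (Fin 2) (Fin 2) ℂ} (hpsd : ρ.PosSemidef) (htr : ρ.trace = 1) :
    ∃ r : V3, ‖r‖ ≤ 1 ∧ ∀ ψ : Fin 2 → ℂ,
      Complex.normSq (ψ 0) + Complex.normSq (ψ 1) = 1 →
      (dotProduct (star ψ) (ρ.mulVec ψ)).re = (1 + ⟪r, bloch ψ⟫)/2 := by
  have hherm := hpsd.1
  have hq := hpsd.dotProduct_mulVec_nonneg
  have h10 : ρ 1 0 = (starRingEnd ℂ) (ρ 0 1) := by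
    rw [← hherm.apply 1 0]; rfl
  have him0 : (ρ 0 0).im = 0 := by
    have h' := congrArg Complex.im (hherm.apply 0 0)
    simp only [Complex.star_def, Complex.conj_im] at h'
    linarith
  have him1 : (ρ 1 1).im = 0 := by
    have h' := congrArg Complex.im (hherm.apply 1 1)
    simp only [Complex.star_def, Complex.conj_im] at h'
    linarith
  have htr' : (ρ 0 0).re + (ρ 1 1).re = 1 := by
    have := congrArg Complex.re (Matrix.trace_fin_two ρ ▸ htr)
    simpa using this
  have ha : 0 ≤ (ρ 0 0).re := by
    have h' := (Complex.le_def.mp (hq ![1, 0])).1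
    simpa [dotProduct, Matrix.mulVec, Fin.sum_univ_two] using h'
  have hd : 0 ≤ (ρ 1 1).re := by
    have h' := (Complex.le_def.mp (hq ![0, 1])).1
    simpa [dotProduct, Matrix.mulVec, Fin.sum_univ_two] using h'
  have hdisc : Complex.normSq (ρ 0 1) * Complex.normSq (ρ 0 1)
      ≤ (ρ 0 0).re * (ρ 1 1).re * Complex.normSq (ρ 0 1) := by
    have hquad : ∀ t : ℝ, 0 ≤ (ρ 1 1).re * (t * t) + (2 * Complex.normSq (ρ 0 1)) * t
        + (ρ 0 0).re * Complex.normSq (ρ 0 1) := by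
      intro t
      have h' := (Complex.le_def.mp (hq ![ρ 0 1, (t : ℂ)])).1
      simp only [dotProduct, Matrix.mulVec, Fin.sum_univ_two, Pi.star_apply,
        Matrix.cons_val_zero, Matrix.cons_val_one, Matrix.head_cons, Complex.zero_re,
        h10, Complex.star_def, Complex.add_re, Complex.mul_re, Complex.mul_im,
        Complex.add_im, Complex.conj_re, Complex.conj_im, Complex.conj_ofReal,
        Complex.ofReal_re, Complex.ofReal_im, him0, him1] at h'
      simp only [Complex.normSq_apply]
      nlinarith [h']
    have hD := discrim_le_zero hquad
    rw [discrim] at hD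
    nlinarith [hD]
  have hdet : Complex.normSq (ρ 0 1) ≤ (ρ 0 0).re * (ρ 1 1).re := by
    rcases eq_or_lt_of_le (Complex.normSq_nonneg (ρ 0 1)) with h | h
    · rw [← h]; positivity
    · nlinarith [hdisc, h]
  set r : V3 := mkV3 (2 * (ρ 0 1).re) (-(2 * (ρ 0 1).im)) ((ρ 0 0).re - (ρ 1 1).re) with hrdef
  refine ⟨r, ?_, ?_⟩
  · have hinner : ⟪r, r⟫ = 4 * Complex.normSq (ρ 0 1) + ((ρ 0 0).re - (ρ 1 1).re)^2 := by
      rw [V3_inner, hrdef, mkV3_0, mkV3_1, mkV3_2, Complex.normSq_apply]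
      ring
    have h2 : ⟪r, r⟫ = ‖r‖^2 := real_inner_self_eq_norm_sq _
    nlinarith [norm_nonneg r, hdet, htr', hinner, h2]
  · intro ψ hψ
    rw [V3_inner, bloch_0, bloch_1, bloch_2, hrdef, mkV3_0, mkV3_1, mkV3_2]
    simp only [dotProduct, Matrix.mulVec, Fin.sum_univ_two, Pi.star_apply, h10,
      Complex.star_def, Complex.normSq_apply, Complex.add_re, Complex.mul_re,
      Complex.mul_im, Complex.add_im, Complex.conj_re, Complex.conj_im, him0, him1] at hψ ⊢
    linear_combination (((ρ 0 0).re + (ρ 1 1).re)/2) * hψ + (1/2) * htr'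

lemma exists_pure {r : V3} (hr : ‖r‖ = 1) :
    ∃ φ : Fin 2 → ℂ, Complex.normSq (φ 0) + Complex.normSq (φ 1) = 1 ∧ bloch φ = r := by
  have h1 : ⟪r, r⟫ = ‖r‖^2 := real_inner_self_eq_norm_sq _
  rw [V3_inner, hr] at h1
  have hsum : r 0 * r 0 + r 1 * r 1 + r 2 * r 2 = 1 := by nlinarith [h1]
  by_cases hz : r 2 = -1
  · have hx : r 0 = 0 := by nlinarith [hsum, hz]
    have hy : r 1 = 0 := by nlinarith [hsum, hz]
    refine ⟨![0, 1], by simp, ?_⟩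
    have h0 : bloch ![0, 1] 0 = r 0 := by rw [bloch_0]; simp [hx]
    have h1' : bloch ![0, 1] 1 = r 1 := by rw [bloch_1]; simp [hy]
    have h2' : bloch ![0, 1] 2 = r 2 := by rw [bloch_2]; simp [hz]
    ext i
    fin_cases i
    exacts [h0, h1', h2']
  · have hz2 : -1 ≤ r 2 := by nlinarith [hsum]
    have hzlt : 0 < 1 + r 2 := by
      rcases hz2.lt_or_eq with h | h
      · linarith
      · exact absurd h.symm hz
    set w := Real.sqrt (2*(1 + r 2)) with hwdef
    have hw : 0 < w := Real.sqrt_pos.mpr (by linarith)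
    have hw2 : w^2 = 2*(1 + r 2) := Real.sq_sqrt (by linarith)
    refine ⟨![((w/2 : ℝ) : ℂ), ((r 0 : ℂ) + (r 1 : ℂ)*Complex.I)/((w : ℝ) : ℂ)], ?_, ?_⟩
    · simp only [Matrix.cons_val_zero, Matrix.cons_val_one, Matrix.head_cons,
        Complex.normSq_div, Complex.normSq_ofReal, Complex.normSq_apply,
          Complex.div_ofReal_re, Complex.div_ofReal_im,
        Complex.add_re, Complex.add_im, Complex.ofReal_re, Complex.ofReal_im,
        Complex.mul_re, Complex.mul_im, Complex.I_re, Complex.I_im]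
      field_simp
      nlinarith [hw2, hsum, hw]
    · have h0 : bloch ![((w/2 : ℝ) : ℂ), ((r 0 : ℂ) + (r 1 : ℂ)*Complex.I)/((w : ℝ) : ℂ)] 0 = r 0 := by
        rw [bloch_0]
        simp only [Matrix.cons_val_zero, Matrix.cons_val_one, Matrix.head_cons,
          Complex.conj_ofReal]
        rw [Complex.re_ofReal_mul, Complex.div_ofReal_re]
        simp only [Complex.add_re, Complex.ofReal_re, Complex.mul_re, Complex.I_re,
          Complex.I_im, Complex.ofReal_im]
        field_simp
        ring
      have h1' : bloch ![((w/2 : ℝ) : ℂ), ((r 0 : ℂ) + (r 1 : ℂ)*Complex.I)/((w : ℝ) : ℂ)] 1 = r 1 := by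
        rw [bloch_1]
        simp only [Matrix.cons_val_zero, Matrix.cons_val_one, Matrix.head_cons,
          Complex.conj_ofReal]
        rw [Complex.im_ofReal_mul, Complex.div_ofReal_im]
        simp only [Complex.add_im, Complex.ofReal_im, Complex.mul_im, Complex.I_re,
          Complex.I_im, Complex.ofReal_re]
        field_simp
        ring
      have h2' : bloch ![((w/2 : ℝ) : ℂ), ((r 0 : ℂ) + (r 1 : ℂ)*Complex.I)/((w : ℝ) : ℂ)] 2 = r 2 := by
        rw [bloch_2]
        simp only [Matrix.cons_val_zero, Matrix.cons_val_one, Matrix.head_cons,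
          Complex.normSq_div, Complex.normSq_ofReal, Complex.normSq_apply,
          Complex.div_ofReal_re, Complex.div_ofReal_im,
          Complex.add_re, Complex.add_im, Complex.ofReal_re, Complex.ofReal_im,
          Complex.mul_re, Complex.mul_im, Complex.I_re, Complex.I_im]
        field_simp
        nlinarith [hw2, hsum, hw]
      ext i
      fin_cases i
      exacts [h0, h1', h2']

theorem stmt6 (ψ : Fin 3 → (Fin 2 → ℂ)) (hψ : ∀ j, inp (ψ j) (ψ j) = 1)
    (n : Fin 3 → ℕ) :
    ∃ φ : Fin 2 → ℂ, inp φ φ = 1 ∧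
      ∀ ρ : Matrix (Fin 2) (Fin 2) ℂ, ρ.PosSemidef → ρ.trace = 1 →
        ∏ j, (dotProduct (star (ψ j)) (ρ.mulVec (ψ j))).re ^ (n j)
          ≤ ∏ j, ‖inp φ (ψ j)‖ ^ (2 * n j) := by
  have hsum_j : ∀ j, Complex.normSq (ψ j 0) + Complex.normSq (ψ j 1) = 1 :=
    fun j => unit_sum (hψ j)
  have hs : ∀ j, ‖(fun j => bloch (ψ j)) j‖ ≤ 1 :=
    fun j => le_of_eq (bloch_norm (hsum_j j))
  obtain ⟨rs, hrs, hmax⟩ := core (fun j => bloch (ψ j)) hs n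
  obtain ⟨φ, hφsum, hφbloch⟩ := exists_pure hrs
  refine ⟨φ, ?_, ?_⟩
  · rw [inp_self, hφsum]
    norm_num
  intro ρ hpsd htr
  obtain ⟨r, hr1, hr2⟩ := rho_bloch hpsd htr
  have hL : ∏ j, (dotProduct (star (ψ j)) (ρ.mulVec (ψ j))).re ^ (n j)
      = fF (fun j => bloch (ψ j)) n r := by
    simp only [fF]
    apply Finset.prod_congr rfl
    intro j _
    rw [hr2 (ψ j) (hsum_j j)]
  have hR : ∏ j, ‖inp φ (ψ j)‖ ^ (2 * n j)
      = fF (fun j => bloch (ψ j)) n rs := by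
    simp only [fF]
    apply Finset.prod_congr rfl
    intro j _
    rw [pow_mul, pure_overlap hφsum (hsum_j j), hφbloch]
  rw [hL, hR]
  exact hmax r hr1
end

section
/- Let d ≥ 1 and let ψ₁, …, ψ_{d²} be d² unit vectors in ℂ^d satisfying the SIC condition |⟨ψ_j, ψ_k⟩|² = (1 + d·δ_{jk})/(d+1) for all j, k. Then Σ_{j=1}^{d²} ψ_j ψ_j† = d·I; that is, the completeness (resolution of the identity) condition of a SIC POVM is automatically implied by the pairwise-overlap condition. -/
open scoped BigOperators

lemma inp_conj {d : ℕ} (φ ψ : Fin d → ℂ) :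
    inp ψ φ = (starRingEnd ℂ) (inp φ ψ) := by
  simp [inp, map_sum, mul_comm]

theorem stmt12 (d : ℕ) (hd : 1 ≤ d)
    (ψ : Fin (d ^ 2) → (Fin d → ℂ)) (hψ : ∀ j, inp (ψ j) (ψ j) = 1)
    (hSIC : ∀ j k, j ≠ k →
      ‖inp (ψ j) (ψ k)‖ ^ 2 = 1 / (d + 1)) :
    ∑ j, Matrix.vecMulVec (ψ j) (star (ψ j))
      = (d : ℂ) • (1 : Matrix (Fin d) (Fin d) ℂ) := by
  have hd1 : ((d : ℂ) + 1) ≠ 0 := by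
    have : (0:ℝ) < (d:ℝ) + 1 := by positivity
    intro h
    have := congrArg Complex.re h
    simp at this
    linarith
  set S : Matrix (Fin d) (Fin d) ℂ := ∑ j, Matrix.vecMulVec (ψ j) (star (ψ j)) with hS
  set A : Matrix (Fin d) (Fin d) ℂ := S - (d : ℂ) • 1 with hA
  -- entries of S
  have hSapp : ∀ i k, S i k = ∑ j, ψ j i * (starRingEnd ℂ) (ψ j k) := by
    intro i k
    simp [hS, Matrix.sum_apply, Matrix.vecMulVec_apply, Pi.star_apply,
      RCLike.star_def]
  -- A is Hermitian entrywise
  have hherm : ∀ i k, A k i = (starRingEnd ℂ) (A i k) := by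
    intro i k
    simp only [hA, Matrix.sub_apply, Matrix.smul_apply, Matrix.one_apply, hSapp,
      map_sub, map_sum, map_mul, Complex.conj_conj]
    congr 1
    · exact Finset.sum_congr rfl fun j _ => mul_comm _ _
    · by_cases h : i = k <;> simp [h, eq_comm]
  -- key overlap value
  have hover : ∀ j k, inp (ψ j) (ψ k) * inp (ψ k) (ψ j)
      = (1 : ℂ)/(d+1) + if k = j then (d : ℂ)/(d+1) else 0 := by
    intro j k
    by_cases h : k = j
    · subst h; simp [hψ k]
      field_simp
      ring
    · have h' : j ≠ k := fun hh => h hh.symm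
      have := hSIC j k h'
      rw [inp_conj (ψ j) (ψ k), mul_comm, ← Complex.normSq_eq_conj_mul_self]
      rw [if_neg h]
      have habs : Complex.normSq (inp (ψ j) (ψ k)) = 1 / (d + 1) := by
        rw [← Complex.sq_norm]; exact_mod_cast this
      rw [habs]
      push_cast
      ring
  -- trace of S
  have htrS : Matrix.trace S = (d : ℂ)^2 := by
    rw [hS, Matrix.trace_sum]
    have : ∀ j, Matrix.trace (Matrix.vecMulVec (ψ j) (star (ψ j))) = 1 := by
      intro j
      have := hψ j
      simp only [Matrix.trace, Matrix.diag, Matrix.vecMulVec_apply, Pi.star_apply,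
        RCLike.star_def]
      rw [← this]
      simp [inp, mul_comm]
    simp [this, Finset.card_univ]
  -- trace of S*S
  have htrSS : Matrix.trace (S * S) = (d : ℂ)^3 := by
    have hPP : ∀ j k : Fin (d^2),
        Matrix.trace (Matrix.vecMulVec (ψ j) (star (ψ j)) * Matrix.vecMulVec (ψ k) (star (ψ k)))
          = inp (ψ j) (ψ k) * inp (ψ k) (ψ j) := by
      intro j k
      simp only [Matrix.trace, Matrix.diag, Matrix.mul_apply, Matrix.vecMulVec_apply,
        Pi.star_apply, RCLike.star_def, inp]
      rw [Finset.sum_comm, Finset.sum_mul_sum]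
      exact Finset.sum_congr rfl fun y _ => Finset.sum_congr rfl fun x _ => by ring
    rw [hS, Finset.sum_mul_sum]
    rw [Matrix.trace_sum]
    simp_rw [Matrix.trace_sum, hPP, hover]
    rw [Finset.sum_comm]
    simp [Finset.sum_add_distrib, Finset.card_univ]
    field_simp
  -- trace of A*A is zero
  have htrAA : Matrix.trace (A * A) = 0 := by
    rw [hA]
    rw [sub_mul, mul_sub, mul_sub, Matrix.trace_sub, Matrix.trace_sub,
      Matrix.trace_sub]
    rw [htrSS]
    simp only [Matrix.smul_mul, Matrix.mul_smul, Matrix.one_mul, Matrix.mul_one,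
      Matrix.trace_smul, htrS, smul_smul, smul_eq_mul, Matrix.trace_one]
    simp [Finset.card_univ]
    ring
  -- trace(A*A) = sum of normSq of entries
  have hsum : (∑ i, ∑ k, (Complex.normSq (A i k) : ℂ)) = 0 := by
    rw [← htrAA]
    simp only [Matrix.trace, Matrix.diag, Matrix.mul_apply]
    refine Finset.sum_congr rfl fun i _ => Finset.sum_congr rfl fun k _ => ?_
    rw [hherm i k, mul_comm, Complex.normSq_eq_conj_mul_self]
  have hre : (∑ i, ∑ k, Complex.normSq (A i k)) = 0 := by
    have := congrArg Complex.re hsum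
    simpa using this
  have hzero : ∀ i k, A i k = 0 := by
    intro i k
    have h1 : ∀ i ∈ (Finset.univ : Finset (Fin d)),
        (0:ℝ) ≤ ∑ k, Complex.normSq (A i k) :=
      fun i _ => Finset.sum_nonneg fun k _ => Complex.normSq_nonneg _
    have h2 := (Finset.sum_eq_zero_iff_of_nonneg h1).mp hre i (Finset.mem_univ i)
    have h3 := (Finset.sum_eq_zero_iff_of_nonneg
      (fun k _ => Complex.normSq_nonneg (A i k))).mp h2 k (Finset.mem_univ k)
    exact Complex.normSq_eq_zero.mp h3
  have : A = 0 := by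
    ext i k; exact hzero i k
  have := sub_eq_zero.mp this
  rw [hS] at this
  exact this
end
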